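/- For the splitting graph of the star K_{1,n} with n even, under the labeling α(v_i) = (-1)^{i+1} for 1 ≤ i ≤ n, α(v_0) = 1, α(v_i') = -α(v_i), α(v_0') = -1, and induced edge labels α*(uv) = α(u)α(v) on the edge set {v_0v_i} ∪ {v_0v_i'} ∪ {v_0'v_i} (1 ≤ i ≤ n), exactly 3n/2 edges receive label 1 and 3n/2 edges receive label -1. -/

import Mathlib

/-- Number of vertices with label `s` under labeling `α`. -/
def vCount {V : Type} [Fintype V] [DecidableEq V] (α : V → ℤ) (s : ℤ) : ℕ :=
  (Finset.univ.filter (fun v => α v = s)).card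

/-- The induced edge label on an unordered pair. -/
def edgeLabel {V : Type} (α : V → ℤ) : Sym2 V → ℤ :=
  Sym2.lift ⟨fun u v => α u * α v, fun u v => mul_comm _ _⟩

/-- Number of edges of `G` with induced label `s` under vertex labeling `α`. -/
def eCount {V : Type} [Fintype V] [DecidableEq V] (G : SimpleGraph V)
    [DecidableRel G.Adj] (α : V → ℤ) (s : ℤ) : ℕ :=
  (G.edgeFinset.filter (fun e => edgeLabel α e = s)).card

/-- `G` admits a signed product cordial labeling. -/
def IsSignedProductCordial {V : Type} [Fintype V] [DecidableEq V]
    (G : SimpleGraph V) [DecidableRel G.Adj] : Prop :=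
  ∃ α : V → ℤ, (∀ v, α v = 1 ∨ α v = -1) ∧
    ((vCount α 1 : ℤ) - (vCount α (-1) : ℤ)).natAbs ≤ 1 ∧
    ((eCount G α 1 : ℤ) - (eCount G α (-1) : ℤ)).natAbs ≤ 1

/-- The splitting graph of `G`: for each vertex `v` (the `inl` copy) a new vertex `v'`
(the `inr` copy) adjacent to exactly the neighbors of `v` in `G`. -/
def splt {V : Type} (G : SimpleGraph V) : SimpleGraph (V ⊕ V) where
  Adj x y := match x, y with
    | .inl u, .inl v => G.Adj u v
    | .inl u, .inr v => G.Adj u v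
    | .inr u, .inl v => G.Adj u v
    | .inr _, .inr _ => False
  symm := ⟨by rintro (u|u) (v|v) h <;> first | exact G.adj_symm h | exact h.elim⟩
  loopless := ⟨by rintro (u|u) h; exact G.irrefl h; exact h⟩

instance {V : Type} (G : SimpleGraph V) [DecidableRel G.Adj] :
    DecidableRel (splt G).Adj := fun x y =>
  match x, y with
  | .inl u, .inl v => inferInstanceAs (Decidable (G.Adj u v))
  | .inl u, .inr v => inferInstanceAs (Decidable (G.Adj u v))
  | .inr u, .inl v => inferInstanceAs (Decidable (G.Adj u v))
  | .inr _, .inr _ => inferInstanceAs (Decidable False)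

/-- The star graph `K_{1,n}`: apex `0`, pendants `1,…,n`. -/
def starGraph (n : ℕ) : SimpleGraph (Fin (n+1)) where
  Adj i j := (i = 0 ∨ j = 0) ∧ i ≠ j
  symm := ⟨fun _ _ h => ⟨h.1.symm, h.2.symm⟩⟩
  loopless := ⟨fun _ h => h.2 rfl⟩

instance (n : ℕ) : DecidableRel (starGraph n).Adj := fun i j =>
  inferInstanceAs (Decidable ((i = 0 ∨ j = 0) ∧ i ≠ j))


/-- The labeling of the splitting graph of the star: `α(v₀) = 1`, `α(vᵢ) = 1` for `i`
odd, `-1` for `i` even, and `α` of each new vertex is the negative of the original. -/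
def starLabel (n : ℕ) : Fin (n+1) ⊕ Fin (n+1) → ℤ
  | .inl i => if i.val = 0 then 1 else if i.val % 2 = 1 then 1 else -1
  | .inr i => -(if i.val = 0 then 1 else if i.val % 2 = 1 then 1 else -1)

open Finset

abbrev Tset (n : ℕ) : Finset (Fin (n+1)) := Finset.univ.filter (fun i => i ≠ 0)

lemma edgeFinset_splt_star (n : ℕ) :
    (splt (starGraph n)).edgeFinset =
      (Tset n).image (fun i => s(Sum.inl 0, Sum.inl i)) ∪
      (Tset n).image (fun i => s(Sum.inl 0, Sum.inr i)) ∪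
      (Tset n).image (fun i => s(Sum.inr 0, Sum.inl i)) := by
  ext e
  refine Sym2.ind (fun x y => ?_) e
  rw [SimpleGraph.mem_edgeFinset, SimpleGraph.mem_edgeSet]
  rcases x with u | u <;> rcases y with v | v <;>
    simp [SimpleGraph.mem_edgeFinset, splt, starGraph, Sym2.eq_iff, eq_comm] <;>
    aesop

lemma inj1 (n : ℕ) : Function.Injective (fun i : Fin (n+1) => s(Sum.inl (0 : Fin (n+1)), (Sum.inl i : Fin (n+1) ⊕ Fin (n+1)))) := by
  intro i j h; simp [Sym2.eq_iff] at h; aesop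

lemma inj2 (n : ℕ) : Function.Injective (fun i : Fin (n+1) => s(Sum.inl (0 : Fin (n+1)), (Sum.inr i : Fin (n+1) ⊕ Fin (n+1)))) := by
  intro i j h; simp [Sym2.eq_iff] at h; aesop

lemma inj3 (n : ℕ) : Function.Injective (fun i : Fin (n+1) => s(Sum.inr (0 : Fin (n+1)), (Sum.inl i : Fin (n+1) ⊕ Fin (n+1)))) := by
  intro i j h; simp [Sym2.eq_iff] at h; aesop


lemma count_main (n : ℕ) (s : ℤ) :
    ((splt (starGraph n)).edgeFinset.filter
        (fun e => edgeLabel (starLabel n) e = s)).card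
    = ((Tset n).filter (fun i => starLabel n (.inl i) = s)).card
      + ((Tset n).filter (fun i => -(starLabel n (.inl i)) = s)).card
      + ((Tset n).filter (fun i => -(starLabel n (.inl i)) = s)).card := by
  rw [edgeFinset_splt_star, Finset.filter_union, Finset.filter_union,
    Finset.card_union_of_disjoint, Finset.card_union_of_disjoint]
  · rw [Finset.filter_image, Finset.filter_image, Finset.filter_image,
      Finset.card_image_of_injective _ (inj1 n),
      Finset.card_image_of_injective _ (inj2 n),
      Finset.card_image_of_injective _ (inj3 n)]
    have e1 : (Tset n).filter (fun a => edgeLabel (starLabel n) s(Sum.inl 0, Sum.inl a) = s)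
        = (Tset n).filter (fun i => starLabel n (.inl i) = s) := by
      apply Finset.filter_congr; intro i hi
      simp only [Tset, Finset.mem_filter] at hi
      have hv : i.val ≠ 0 := by intro h; exact hi.2 (Fin.ext (by simp [h]))
      simp [edgeLabel, starLabel, hv, hi.2]
    have e2 : (Tset n).filter (fun a => edgeLabel (starLabel n) s(Sum.inl 0, Sum.inr a) = s)
        = (Tset n).filter (fun i => -starLabel n (.inl i) = s) := by
      apply Finset.filter_congr; intro i hi
      simp only [Tset, Finset.mem_filter] at hi
      have hv : i.val ≠ 0 := by intro h; exact hi.2 (Fin.ext (by simp [h]))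
      simp [edgeLabel, starLabel, hv, hi.2]
    have e3 : (Tset n).filter (fun a => edgeLabel (starLabel n) s(Sum.inr 0, Sum.inl a) = s)
        = (Tset n).filter (fun i => -starLabel n (.inl i) = s) := by
      apply Finset.filter_congr; intro i hi
      simp only [Tset, Finset.mem_filter] at hi
      have hv : i.val ≠ 0 := by intro h; exact hi.2 (Fin.ext (by simp [h]))
      simp only [edgeLabel, starLabel, Sym2.lift_mk, Fin.val_zero, hv, hi.2, if_false,
        reduceIte]
      split_ifs <;> simp <;> omega
    rw [e1, e2, e3]
  · refine Disjoint.mono (Finset.filter_subset _ _) (Finset.filter_subset _ _) ?_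
    rw [Finset.disjoint_left]
    simp only [Finset.mem_image, not_exists]
    rintro e ⟨i, -, rfl⟩ j
    simp [Sym2.eq_iff]
  · refine Finset.disjoint_union_left.2 ⟨?_, ?_⟩ <;>
      · refine Disjoint.mono (Finset.filter_subset _ _) (Finset.filter_subset _ _) ?_
        rw [Finset.disjoint_left]
        simp only [Finset.mem_image, not_exists]
        rintro e ⟨i, -, rfl⟩ j
        simp [Sym2.eq_iff]
        all_goals tauto


lemma fin_filter_card' (m : ℕ) (p : ℕ → Prop) [DecidablePred p] :
    ((Finset.univ : Finset (Fin m)).filter (fun i => p i.val)).card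
      = ((Finset.range m).filter p).card := by
  rw [← Nat.Iio_eq_range, ← Fin.map_valEmbedding_univ, Finset.filter_map,
    Finset.card_map]
  rfl

lemma range_odd_card' (m : ℕ) :
    ((Finset.range m).filter (fun k => k % 2 = 1)).card = m / 2 := by
  induction m with
  | zero => simp
  | succ m ih =>
    rw [Finset.range_add_one, Finset.filter_insert]
    by_cases h : m % 2 = 1
    · rw [if_pos h, Finset.card_insert_of_notMem (by simp)]
      omega
    · rw [if_neg h]; omega

lemma range_even_pos_card' (m : ℕ) :
    ((Finset.range m).filter (fun k => ¬ k = 0 ∧ k % 2 = 0)).card = (m - 1) / 2 := by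
  induction m with
  | zero => simp
  | succ m ih =>
    rw [Finset.range_add_one, Finset.filter_insert]
    by_cases h : ¬ m = 0 ∧ m % 2 = 0
    · rw [if_pos h, Finset.card_insert_of_notMem (by simp)]
      omega
    · rw [if_neg h]; omega

lemma cardA (n : ℕ) (hn : n % 2 = 0) :
    ((Tset n).filter (fun i => starLabel n (.inl i) = 1)).card = n / 2 := by
  rw [Tset, Finset.filter_filter]
  have h : (Finset.univ.filter (fun i : Fin (n+1) => i ≠ 0 ∧ starLabel n (.inl i) = 1))
      = Finset.univ.filter (fun i : Fin (n+1) => i.val % 2 = 1) := by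
    apply Finset.filter_congr
    intro i _
    simp only [starLabel, Ne, Fin.ext_iff, Fin.val_zero]
    by_cases h : (i : ℕ) = 0 <;> simp [h] <;> split_ifs <;> simp_all
  rw [h, fin_filter_card' (n+1) (fun k => k % 2 = 1), range_odd_card']
  omega

lemma cardB (n : ℕ) :
    ((Tset n).filter (fun i => starLabel n (.inl i) = -1)).card = n / 2 := by
  rw [Tset, Finset.filter_filter]
  have h : (Finset.univ.filter (fun i : Fin (n+1) => i ≠ 0 ∧ starLabel n (.inl i) = -1))
      = Finset.univ.filter (fun i : Fin (n+1) => ¬ i.val = 0 ∧ i.val % 2 = 0) := by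
    apply Finset.filter_congr
    intro i _
    simp only [starLabel, Ne, Fin.ext_iff, Fin.val_zero]
    by_cases h : (i : ℕ) = 0 <;> simp [h] <;> split_ifs <;> simp_all <;> omega
  rw [h, fin_filter_card' (n+1) (fun k => ¬ k = 0 ∧ k % 2 = 0), range_even_pos_card']
  omega

theorem splt_star_edge_counts_even' (n : ℕ) (hn : n % 2 = 0) :
    ((splt (starGraph n)).edgeFinset.filter
        (fun e => edgeLabel (starLabel n) e = 1)).card = 3 * n / 2 ∧
    ((splt (starGraph n)).edgeFinset.filter
        (fun e => edgeLabel (starLabel n) e = -1)).card = 3 * n / 2 := by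
  have hneg : ∀ s : ℤ, (Tset n).filter (fun i => -starLabel n (.inl i) = s)
      = (Tset n).filter (fun i => starLabel n (.inl i) = -s) := by
    intro s
    apply Finset.filter_congr
    intro i _
    constructor <;> intro h <;> omega
  constructor
  · rw [count_main n 1, hneg 1, cardB n, cardA n hn]
    omega
  · rw [count_main n (-1), hneg (-1)]
    have : (Tset n).filter (fun i => starLabel n (Sum.inl i) = -(-1))
        = (Tset n).filter (fun i => starLabel n (Sum.inl i) = 1) := by
      norm_num
    rw [this, cardA n hn, cardB n]
    omega

/-- For `n` even, under the labeling `starLabel`, exactly `3n/2` edges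
of the splitting graph of `K_{1,n}` receive induced label `1` and `3n/2` receive `-1`. -/
theorem splt_star_edge_counts_even (n : ℕ) (hn : n % 2 = 0) :
    eCount (splt (starGraph n)) (starLabel n) 1 = 3 * n / 2 ∧
    eCount (splt (starGraph n)) (starLabel n) (-1) = 3 * n / 2 := by
  exact splt_star_edge_counts_even' n hn
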